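/- There exists an absolute constant C > 0 such that for every ε > 0, if the number of iterations satisfies T ≥ e^{C·√(nL/ε)} (and T ≥ 2), then the Frank–Wolfe algorithm's best iterate satisfies max_{0 ≤ j ≤ T} F(x(t_j)) ≥ (1/4) F(x*) − ε. -/

import Mathlib

/-- The harmonic number `H j = ∑_{k=1}^j 1/k` (with `H 0 = 0`). -/
noncomputable def harmonicNum (j : ℕ) : ℝ := ∑ k ∈ Finset.range j, (1 : ℝ) / (k + 1)

/-- `H_{2,j} = ∑_{k=1}^j 1/k²`. -/
noncomputable def harmonicNum2 (j : ℕ) : ℝ := ∑ k ∈ Finset.range j, (1 : ℝ) / ((k : ℝ) + 1) ^ 2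

/-- The time values `t_j = 1/(1 - ln(1 + H_j/H_T)) - 1` of the Frank–Wolfe algorithm. -/
noncomputable def fwTime (T j : ℕ) : ℝ :=
  1 / (1 - Real.log (1 + harmonicNum j / harmonicNum T)) - 1

/-- The Frank–Wolfe step ratio `e^{-1/(1+t_j) + 1/(1+t_{j+1})}`. -/
noncomputable def fwRatio (T j : ℕ) : ℝ :=
  Real.exp (-(1 / (1 + fwTime T j)) + 1 / (1 + fwTime T (j + 1)))

/-- `√a_{t_j} = e^{t_j/(1+t_j)}`. -/
noncomputable def fwSqa (T j : ℕ) : ℝ := Real.exp (fwTime T j / (1 + fwTime T j))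

/-- `F : [0,1]^n → ℝ` is DR-submodular: for all `x ≤ y` in `[0,1]^n`, coordinates `i` and
`a > 0` with `x + a·e_i, y + a·e_i ∈ [0,1]^n`, one has
`F(x + a·e_i) - F(x) ≥ F(y + a·e_i) - F(y)`. -/
def DRSubmodular {n : ℕ} (F : (Fin n → ℝ) → ℝ) : Prop :=
  ∀ x y : Fin n → ℝ, x ∈ Set.Icc (0 : Fin n → ℝ) 1 → y ∈ Set.Icc (0 : Fin n → ℝ) 1 →
    x ≤ y → ∀ i : Fin n, ∀ a : ℝ, 0 < a →
      x + a • (Pi.single i 1 : Fin n → ℝ) ∈ Set.Icc (0 : Fin n → ℝ) 1 →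
      y + a • (Pi.single i 1 : Fin n → ℝ) ∈ Set.Icc (0 : Fin n → ℝ) 1 →
      F (y + a • (Pi.single i 1 : Fin n → ℝ)) - F y ≤
        F (x + a • (Pi.single i 1 : Fin n → ℝ)) - F x

/-- The continuous linear map `y ↦ ⟨g, y⟩ = ∑ i, g i * y i` on `ℝⁿ`. -/
noncomputable def gradCLM {n : ℕ} (g : Fin n → ℝ) : (Fin n → ℝ) →L[ℝ] ℝ :=
  ∑ i, g i • (ContinuousLinearMap.proj i : (Fin n → ℝ) →L[ℝ] ℝ)

/-- `gradF` is the gradient of `F` on the box `[0,1]^n`: at each point of the box, `F` is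
differentiable within the box with derivative `y ↦ ⟨gradF z, y⟩`. -/
def HasGradientOnBox {n : ℕ} (F : (Fin n → ℝ) → ℝ) (gradF : (Fin n → ℝ) → Fin n → ℝ) : Prop :=
  ∀ z ∈ Set.Icc (0 : Fin n → ℝ) 1, HasFDerivWithinAt F (gradCLM (gradF z)) (Set.Icc 0 1) z

open Set Filter

variable {n : ℕ} {F : (Fin n → ℝ) → ℝ} {gradF : (Fin n → ℝ) → Fin n → ℝ}

lemma gradCLM_apply (g y : Fin n → ℝ) : gradCLM g y = ∑ i, g i * y i := by
  simp [gradCLM]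

lemma seg_deriv (hgrad : HasGradientOnBox F gradF) (x u : Fin n → ℝ) (R : ℝ)
    (hmaps : ∀ l ∈ Set.Icc (0:ℝ) R, x + l • u ∈ Set.Icc (0:Fin n→ℝ) 1)
    {l : ℝ} (hl : l ∈ Set.Icc (0:ℝ) R) :
    HasDerivWithinAt (fun a : ℝ => F (x + a • u))
      (∑ i, gradF (x + l • u) i * u i) (Set.Icc 0 R) l := by
  have hp : HasDerivWithinAt (fun a : ℝ => x + a • u) u (Set.Icc 0 R) l := by
    simpa using (((hasDerivAt_id l).smul_const u).const_add x).hasDerivWithinAt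
  have := (hgrad _ (hmaps l hl)).comp_hasDerivWithinAt l hp (fun a ha => hmaps a ha)
  simpa [Function.comp_def, gradCLM_apply] using this

lemma seg_mvt (hgrad : HasGradientOnBox F gradF) (x u : Fin n → ℝ) (R : ℝ)
    (hmaps : ∀ l ∈ Set.Icc (0:ℝ) R, x + l • u ∈ Set.Icc (0:Fin n→ℝ) 1)
    {a b : ℝ} (hab : a < b) (ha : 0 ≤ a) (hb : b ≤ R) :
    ∃ c ∈ Set.Ioo a b, F (x + b • u) - F (x + a • u)
      = (b - a) * ∑ i, gradF (x + c • u) i * u i := by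
  have hsub : Set.Icc a b ⊆ Set.Icc (0:ℝ) R := Set.Icc_subset_Icc ha hb
  have hcont : ContinuousOn (fun a : ℝ => F (x + a • u)) (Set.Icc a b) := by
    intro t ht
    exact ((seg_deriv hgrad x u R hmaps (hsub ht)).continuousWithinAt).mono hsub
  have hderiv : ∀ c ∈ Set.Ioo a b,
      HasDerivAt (fun a : ℝ => F (x + a • u)) (∑ i, gradF (x + c • u) i * u i) c := by
    intro c hc
    have hcR : c ∈ Set.Icc (0:ℝ) R := ⟨le_of_lt (lt_of_le_of_lt ha hc.1), le_trans hc.2.le hb⟩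
    exact (seg_deriv hgrad x u R hmaps hcR).hasDerivAt
      (Icc_mem_nhds (lt_of_le_of_lt ha hc.1) (lt_of_lt_of_le hc.2 hb))
  obtain ⟨c, hc, hceq⟩ := exists_hasDerivAt_eq_slope _ _ hab hcont hderiv
  refine ⟨c, hc, ?_⟩
  rw [hceq, mul_div_assoc']
  rw [mul_comm, mul_div_assoc, div_self (by linarith : b - a ≠ 0), mul_one]

lemma add_single_mem_box {z : Fin n → ℝ} (hz : z ∈ Set.Icc (0:Fin n→ℝ) 1)
    (i : Fin n) {a : ℝ} (h0 : 0 ≤ z i + a) (h1 : z i + a ≤ 1) :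
    z + a • (Pi.single i 1 : Fin n → ℝ) ∈ Set.Icc (0:Fin n→ℝ) 1 := by
  constructor <;> intro j <;>
    simp only [Pi.add_apply, Pi.smul_apply, Pi.single_apply, Pi.zero_apply, Pi.one_apply,
      smul_eq_mul]
  · split_ifs with h
    · subst h; linarith
    · simpa using hz.1 j
  · split_ifs with h
    · subst h; linarith
    · simpa using hz.2 j

lemma grad_anti (hDR : DRSubmodular F) (hgrad : HasGradientOnBox F gradF)
    {x y : Fin n → ℝ} (hx : x ∈ Set.Icc (0:Fin n→ℝ) 1) (hy : y ∈ Set.Icc (0:Fin n→ℝ) 1)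
    (hxy : x ≤ y) (i : Fin n) (hlt : x i < y i) : gradF y i ≤ gradF x i := by
  set e : Fin n → ℝ := Pi.single i 1 with he
  have hxi0 : (0:ℝ) ≤ x i := by simpa using hx.1 i
  have hyi1 : y i ≤ 1 := by simpa using hy.2 i
  have hR1 : (0:ℝ) < 1 - x i := by linarith
  have hR2 : (0:ℝ) < y i - x i := by linarith
  set R : ℝ := min (1 - x i) (y i - x i) with hRdef
  have hRpos : 0 < R := lt_min hR1 hR2
  -- derivative for x along +e
  have hmx : ∀ l ∈ Set.Icc (0:ℝ) (1 - x i), x + l • e ∈ Set.Icc (0:Fin n→ℝ) 1 := by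
    intro l hl
    exact add_single_mem_box hx i (by linarith [hl.1]) (by linarith [hl.2])
  have hdx : HasDerivWithinAt (fun a : ℝ => F (x + a • e)) (gradF x i)
      (Set.Icc 0 (1 - x i)) 0 := by
    have := seg_deriv hgrad x e (1 - x i) hmx (l := 0) ⟨le_refl 0, by linarith⟩
    simpa [he, Pi.single_apply, mul_ite, Finset.sum_ite_eq'] using this
  -- derivative for y along -e
  have hmy : ∀ l ∈ Set.Icc (0:ℝ) (y i - x i), y + l • (-e) ∈ Set.Icc (0:Fin n→ℝ) 1 := by
    intro l hl
    have : y + l • (-e) = y + (-l) • e := by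
      rw [smul_neg, neg_smul]
    rw [this]
    exact add_single_mem_box hy i (by linarith [hl.2]) (by linarith [hl.1])
  have hdy : HasDerivWithinAt (fun a : ℝ => F (y + a • (-e))) (-(gradF y i))
      (Set.Icc 0 (y i - x i)) 0 := by
    have := seg_deriv hgrad y (-e) (y i - x i) hmy (l := 0) ⟨le_refl 0, by linarith⟩
    simpa [he, Pi.single_apply, mul_ite, Finset.sum_ite_eq'] using this
  -- pass to slopes on common filter
  set S : Set ℝ := Set.Ioc (0:ℝ) R with hSdef
  have hne : (nhdsWithin (0:ℝ) S).NeBot := by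
    apply mem_closure_iff_nhdsWithin_neBot.1
    rw [hSdef, closure_Ioc (ne_of_lt hRpos)]
    exact ⟨le_refl 0, le_of_lt hRpos⟩
  have hsx : Filter.Tendsto (slope (fun a : ℝ => F (x + a • e)) 0) (nhdsWithin 0 S)
      (nhds (gradF x i)) := by
    refine (hasDerivWithinAt_iff_tendsto_slope.1 hdx).mono_left (nhdsWithin_mono 0 ?_)
    intro a ha
    exact ⟨⟨le_of_lt ha.1, le_trans ha.2 (min_le_left _ _)⟩, ne_of_gt ha.1⟩
  have hsy : Filter.Tendsto (fun a => -(slope (fun a : ℝ => F (y + a • (-e))) 0 a))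
      (nhdsWithin 0 S) (nhds (gradF y i)) := by
    have := (hasDerivWithinAt_iff_tendsto_slope.1 hdy).mono_left
      (nhdsWithin_mono (0:ℝ) (s := S) (fun a ha =>
        ⟨⟨le_of_lt ha.1, le_trans ha.2 (min_le_right _ _)⟩, ne_of_gt ha.1⟩))
    simpa using this.neg
  refine le_of_tendsto_of_tendsto hsy hsx (eventually_mem_nhdsWithin.mono ?_)
  intro a haS
  have ha0 : 0 < a := haS.1
  have haR1 : a ≤ 1 - x i := le_trans haS.2 (min_le_left _ _)
  have haR2 : a ≤ y i - x i := le_trans haS.2 (min_le_right _ _)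
  have hcancel : (y + a • (-e)) + a • e = y := by
    rw [smul_neg, add_assoc, neg_add_cancel, add_zero]
  have key : F y - F (y + a • (-e)) ≤ F (x + a • e) - F x := by
    have hyb : y + a • (-e) ∈ Set.Icc (0:Fin n→ℝ) 1 := hmy a ⟨le_of_lt ha0, haR2⟩
    have hle' : x ≤ y + a • (-e) := by
      intro j
      simp only [Pi.add_apply, Pi.smul_apply, Pi.neg_apply, he, Pi.single_apply, smul_eq_mul]
      split_ifs with h
      · subst h; rw [mul_neg_one]; linarith
      · simpa using hxy j
    have hbx : x + a • e ∈ Set.Icc (0:Fin n→ℝ) 1 := hmx a ⟨le_of_lt ha0, haR1⟩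
    have hby : (y + a • (-e)) + a • e ∈ Set.Icc (0:Fin n→ℝ) 1 := by
      rw [hcancel]; exact hy
    have := hDR x (y + a • (-e)) hx hyb hle' i a ha0 hbx hby
    rwa [hcancel] at this
  have hfx0 : (fun a : ℝ => F (x + a • e)) 0 = F x := by norm_num
  have hfy0 : (fun a : ℝ => F (y + a • (-e))) 0 = F y := by norm_num
  simp only [slope_def_field, hfx0, hfy0, sub_zero]
  have hEq : -((F (y + a • -e) - F y) / a) = (F y - F (y + a • -e)) / a := by ring
  rw [hEq]
  gcongr

lemma seg_maps {x u : Fin n → ℝ} (hx : x ∈ Set.Icc (0:Fin n→ℝ) 1) (hu : ∀ i, 0 ≤ u i)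
    {R : ℝ} (hRpos : 0 < R) (hR : x + R • u ∈ Set.Icc (0:Fin n→ℝ) 1) :
    ∀ l ∈ Set.Icc (0:ℝ) R, x + l • u ∈ Set.Icc (0:Fin n→ℝ) 1 := by
  intro l hl
  constructor <;> intro j
  · have h1 : (0:ℝ) ≤ x j := by simpa using hx.1 j
    have : (0:ℝ) ≤ x j + l * u j := add_nonneg h1 (mul_nonneg hl.1 (hu j))
    simpa [Pi.add_apply, Pi.smul_apply, Pi.zero_apply, smul_eq_mul] using this
  · have h1 : x j + R * u j ≤ 1 := by simpa [Pi.add_apply, Pi.smul_apply, smul_eq_mul] using hR.2 j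
    have h2 : l * u j ≤ R * u j := mul_le_mul_of_nonneg_right hl.2 (hu j)
    have : x j + l * u j ≤ 1 := by linarith
    simpa [Pi.add_apply, Pi.smul_apply, smul_eq_mul] using this

lemma secant_le_tangent (hDR : DRSubmodular F) (hgrad : HasGradientOnBox F gradF)
    {x u : Fin n → ℝ} (hx : x ∈ Set.Icc (0:Fin n→ℝ) 1) (hu : ∀ i, 0 ≤ u i)
    (hxu : x + u ∈ Set.Icc (0:Fin n→ℝ) 1) :
    F (x + u) - F x ≤ ∑ i, gradF x i * u i := by
  have hmaps := seg_maps hx hu one_pos (by simpa using hxu)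
  obtain ⟨c, hc, hceq⟩ := seg_mvt hgrad x u 1 hmaps one_pos (le_refl 0) (le_refl 1)
  have h1 : x + (1:ℝ) • u = x + u := by rw [one_smul]
  have h0 : x + (0:ℝ) • u = x := by rw [zero_smul, add_zero]
  rw [h1, h0, sub_zero, one_mul] at hceq
  rw [hceq]
  apply Finset.sum_le_sum
  intro i _
  rcases eq_or_lt_of_le (hu i) with h | h
  · simp [← h]
  · have hcb : x + c • u ∈ Set.Icc (0:Fin n→ℝ) 1 := hmaps c ⟨hc.1.le, hc.2.le⟩
    have hle : x ≤ x + c • u := by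
      intro j
      have : 0 ≤ c * u j := mul_nonneg hc.1.le (hu j)
      simp only [Pi.add_apply, Pi.smul_apply, smul_eq_mul]
      linarith
    have hlt : x i < (x + c • u) i := by
      have : 0 < c * u i := mul_pos hc.1 h
      simp only [Pi.add_apply, Pi.smul_apply, smul_eq_mul]
      linarith
    exact mul_le_mul_of_nonneg_right (grad_anti hDR hgrad hx hcb hle i hlt) (hu i)

lemma tangent_le_secant (hDR : DRSubmodular F) (hgrad : HasGradientOnBox F gradF)
    {x u : Fin n → ℝ} (hx : x ∈ Set.Icc (0:Fin n→ℝ) 1) (hu : ∀ i, 0 ≤ u i)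
    (hxu : x + u ∈ Set.Icc (0:Fin n→ℝ) 1) :
    ∑ i, gradF (x + u) i * u i ≤ F (x + u) - F x := by
  have hmaps := seg_maps hx hu one_pos (by simpa using hxu)
  obtain ⟨c, hc, hceq⟩ := seg_mvt hgrad x u 1 hmaps one_pos (le_refl 0) (le_refl 1)
  have h1 : x + (1:ℝ) • u = x + u := by rw [one_smul]
  have h0 : x + (0:ℝ) • u = x := by rw [zero_smul, add_zero]
  rw [h1, h0, sub_zero, one_mul] at hceq
  rw [hceq]
  apply Finset.sum_le_sum
  intro i _
  rcases eq_or_lt_of_le (hu i) with h | h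
  · simp [← h]
  · have hcb : x + c • u ∈ Set.Icc (0:Fin n→ℝ) 1 := hmaps c ⟨hc.1.le, hc.2.le⟩
    have hle : x + c • u ≤ x + u := by
      intro j
      have : c * u j ≤ u j := by
        have := mul_le_mul_of_nonneg_right hc.2.le (hu j)
        simpa using this
      simp only [Pi.add_apply, Pi.smul_apply, smul_eq_mul]
      linarith
    have hlt : (x + c • u) i < (x + u) i := by
      have : c * u i < u i := by
        have := mul_lt_mul_of_pos_right hc.2 h
        simpa using this
      simp only [Pi.add_apply, Pi.smul_apply, smul_eq_mul]
      linarith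
    exact mul_le_mul_of_nonneg_right (grad_anti hDR hgrad hcb hxu hle i hlt) (hu i)

lemma union_lower (hDR : DRSubmodular F) (hgrad : HasGradientOnBox F gradF)
    (hF0 : ∀ z ∈ Set.Icc (0:Fin n→ℝ) 1, 0 ≤ F z)
    {x y : Fin n → ℝ} {m : ℝ}
    (hx : x ∈ Set.Icc (0:Fin n→ℝ) 1) (hy : y ∈ Set.Icc (0:Fin n→ℝ) 1)
    (hm : ∀ i, x i ≤ m) (hm1 : m < 1) (hm0 : 0 ≤ m) :
    (1 - m) * F y ≤ F (fun i => max (x i) (y i)) := by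
  rcases eq_or_lt_of_le hm0 with hm0' | hm0'
  · -- m = 0 : x ≤ 0 so max = y
    have hxy : (fun i => max (x i) (y i)) = y := by
      funext i
      have h1 : x i ≤ 0 := by rw [hm0']; exact hm i
      have h2 : (0:ℝ) ≤ y i := by simpa using hy.1 i
      exact max_eq_right (le_trans h1 h2)
    rw [hxy, ← hm0']
    norm_num
  -- m > 0
  set w : Fin n → ℝ := fun i => max (x i) (y i) - y i with hw
  have hwnn : ∀ i, 0 ≤ w i := fun i => by simp [hw, le_max_right]
  have hR : (1:ℝ) < 1 / m := by
    rw [lt_div_iff₀ hm0']; linarith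
  have hend : y + (1/m) • w ∈ Set.Icc (0:Fin n→ℝ) 1 := by
    constructor <;> intro j
    · have h2 : (0:ℝ) ≤ y j := by simpa using hy.1 j
      have : (0:ℝ) ≤ y j + (1/m) * w j :=
        add_nonneg h2 (mul_nonneg (by positivity) (hwnn j))
      simpa [Pi.add_apply, Pi.smul_apply, Pi.zero_apply, smul_eq_mul] using this
    · have hyj : y j ≤ 1 := by simpa using hy.2 j
      have hyj0 : (0:ℝ) ≤ y j := by simpa using hy.1 j
      have hkey : y j + (1/m) * w j ≤ 1 := by
        rcases le_or_gt (x j) (y j) with h | h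
        · have : w j = 0 := by simp [hw, max_eq_right h]
          rw [this]; simpa using hyj
        · have hwj : w j = x j - y j := by simp [hw, max_eq_left h.le]
          rw [hwj, div_mul_eq_mul_div, one_mul]
          have h2 : (x j - y j) / m ≤ 1 - y j := by
            rw [div_le_iff₀ hm0']
            nlinarith [hm j, hyj0]
          linarith
      simpa [Pi.add_apply, Pi.smul_apply, Pi.one_apply, smul_eq_mul] using hkey
  have hmaps := seg_maps hy hwnn (by positivity : (0:ℝ) < 1/m) hend
  obtain ⟨c1, hc1, heq1⟩ := seg_mvt hgrad y w (1/m) hmaps one_pos (le_refl 0) hR.le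
  obtain ⟨c2, hc2, heq2⟩ := seg_mvt hgrad y w (1/m) hmaps hR zero_le_one (le_refl _)
  have h0 : y + (0:ℝ) • w = y := by rw [zero_smul, add_zero]
  rw [h0, sub_zero, one_mul] at heq1
  -- compare the two gradient sums
  have hcb1 : y + c1 • w ∈ Set.Icc (0:Fin n→ℝ) 1 :=
    hmaps c1 ⟨hc1.1.le, le_trans hc1.2.le hR.le⟩
  have hcb2 : y + c2 • w ∈ Set.Icc (0:Fin n→ℝ) 1 := hmaps c2 ⟨by linarith [hc2.1], hc2.2.le⟩
  have hc12 : c1 < c2 := lt_trans hc1.2 hc2.1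
  have hAB : ∑ i, gradF (y + c2 • w) i * w i ≤ ∑ i, gradF (y + c1 • w) i * w i := by
    apply Finset.sum_le_sum
    intro i _
    rcases eq_or_lt_of_le (hwnn i) with h | h
    · simp [← h]
    · have hle : y + c1 • w ≤ y + c2 • w := by
        intro j
        have : c1 * w j ≤ c2 * w j := mul_le_mul_of_nonneg_right hc12.le (hwnn j)
        simp only [Pi.add_apply, Pi.smul_apply, smul_eq_mul]
        linarith
      have hlt : (y + c1 • w) i < (y + c2 • w) i := by
        have : c1 * w i < c2 * w i := mul_lt_mul_of_pos_right hc12 h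
        simp only [Pi.add_apply, Pi.smul_apply, smul_eq_mul]
        linarith
      exact mul_le_mul_of_nonneg_right (grad_anti hDR hgrad hcb1 hcb2 hle i hlt) (hwnn i)
  have hmax : y + (1:ℝ) • w = fun i => max (x i) (y i) := by
    funext i
    simp [hw]
  rw [hmax] at heq1 heq2
  have hG2 : 0 ≤ F (y + (1/m) • w) := hF0 _ hend
  set G0 := F y
  set G1 := F (fun i => max (x i) (y i))
  set G2 := F (y + (1/m) • w)
  set A := ∑ i, gradF (y + c1 • w) i * w i
  set B := ∑ i, gradF (y + c2 • w) i * w i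
  -- heq1 : G1 - G0 = A ; heq2 : G2 - G1 = (1/m - 1) * B
  have hB' : m * (G2 - G1) = (1 - m) * B := by
    rw [heq2]
    field_simp
  nlinarith [mul_le_mul_of_nonneg_left hAB (by linarith : (0:ℝ) ≤ 1 - m),
    mul_nonneg hm0 hG2]

lemma grad_inner_lower (hDR : DRSubmodular F) (hgrad : HasGradientOnBox F gradF)
    (hF0 : ∀ z ∈ Set.Icc (0:Fin n→ℝ) 1, 0 ≤ F z)
    {x y : Fin n → ℝ}
    (hx : x ∈ Set.Icc (0:Fin n→ℝ) 1) (hy : y ∈ Set.Icc (0:Fin n→ℝ) 1) :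
    F (fun i => max (x i) (y i)) - 2 * F x ≤ ∑ i, gradF x i * (y i - x i) := by
  set u1 : Fin n → ℝ := fun i => max (x i) (y i) - x i with hu1
  set z : Fin n → ℝ := fun i => min (x i) (y i) with hz
  set u2 : Fin n → ℝ := fun i => x i - min (x i) (y i) with hu2
  have hu1nn : ∀ i, 0 ≤ u1 i := fun i => by simp [hu1, le_max_left]
  have hu2nn : ∀ i, 0 ≤ u2 i := fun i => by simp [hu2, min_le_left]
  have hmaxbox : (fun i => max (x i) (y i)) ∈ Set.Icc (0:Fin n→ℝ) 1 := by
    constructor <;> intro j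
    · have := hx.1 j
      simp only [Pi.zero_apply] at this ⊢
      exact le_trans this (le_max_left _ _)
    · have h1 : x j ≤ 1 := by simpa using hx.2 j
      have h2 : y j ≤ 1 := by simpa using hy.2 j
      simp only [Pi.one_apply]
      exact max_le h1 h2
  have hzbox : z ∈ Set.Icc (0:Fin n→ℝ) 1 := by
    constructor <;> intro j
    · have h1 : (0:ℝ) ≤ x j := by simpa using hx.1 j
      have h2 : (0:ℝ) ≤ y j := by simpa using hy.1 j
      simp only [hz, Pi.zero_apply]
      exact le_min h1 h2
    · have h1 : x j ≤ 1 := by simpa using hx.2 j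
      simp only [hz, Pi.one_apply]
      exact le_trans (min_le_left _ _) h1
  have hxu1 : x + u1 = fun i => max (x i) (y i) := by funext i; simp [hu1]
  have hzu2 : z + u2 = x := by funext i; simp [hz, hu2]
  have hE1 : F (fun i => max (x i) (y i)) - F x ≤ ∑ i, gradF x i * u1 i := by
    have := secant_le_tangent hDR hgrad hx hu1nn (by rw [hxu1]; exact hmaxbox)
    rwa [hxu1] at this
  have hE2 : ∑ i, gradF x i * u2 i ≤ F x - F z := by
    have := tangent_le_secant hDR hgrad hzbox hu2nn (by rw [hzu2]; exact hx)
    rwa [hzu2] at this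
  have hFz : 0 ≤ F z := hF0 _ hzbox
  have hsplit : ∑ i, gradF x i * (y i - x i)
      = (∑ i, gradF x i * u1 i) - ∑ i, gradF x i * u2 i := by
    rw [← Finset.sum_sub_distrib]
    apply Finset.sum_congr rfl
    intro i _
    simp only [hu1, hu2]
    have hmin : x i ⊓ y i = x i + y i - x i ⊔ y i := by
      linarith [max_add_min (x i) (y i)]
    rw [hmin]
    ring
  rw [hsplit]
  linarith

lemma harmonicNum_nonneg (j : ℕ) : 0 ≤ harmonicNum j := by
  apply Finset.sum_nonneg; intro k _; positivity

lemma harmonicNum_succ (j : ℕ) : harmonicNum (j+1) = harmonicNum j + 1/((j:ℝ)+1) := by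
  rw [harmonicNum, Finset.sum_range_succ, harmonicNum]

lemma harmonicNum_mono : Monotone harmonicNum := by
  intro a b hab
  apply Finset.sum_le_sum_of_subset_of_nonneg (Finset.range_subset_range.2 hab)
  intro k _ _; positivity

lemma one_le_harmonicNum {T : ℕ} (hT : 1 ≤ T) : 1 ≤ harmonicNum T := by
  have h1 : harmonicNum 1 = 1 := by simp [harmonicNum]
  calc (1:ℝ) = harmonicNum 1 := h1.symm
  _ ≤ harmonicNum T := harmonicNum_mono hT

lemma log_le_harmonicNum (T : ℕ) : Real.log ((T:ℝ)+1) ≤ harmonicNum T := by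
  induction T with
  | zero => simp [harmonicNum]
  | succ j ih =>
    have h1 : ((j:ℝ)+1) ≠ 0 := by positivity
    have h2 : (0:ℝ) < ((j:ℝ)+1+1)/((j:ℝ)+1) := by positivity
    have hlog : Real.log (((j:ℝ)+1+1)/((j:ℝ)+1)) ≤ 1/((j:ℝ)+1) := by
      have := Real.log_le_sub_one_of_pos h2
      have heq : ((j:ℝ)+1+1)/((j:ℝ)+1) - 1 = 1/((j:ℝ)+1) := by field_simp; ring
      linarith
    have hsplit : Real.log ((j:ℝ)+1+1) = Real.log ((j:ℝ)+1) + Real.log (((j:ℝ)+1+1)/((j:ℝ)+1)) := by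
      rw [Real.log_div (by positivity) h1]
      ring
    rw [harmonicNum_succ]
    push_cast
    push_cast at hsplit hlog ih
    linarith

lemma harmonicNum2_le_two (T : ℕ) : harmonicNum2 T ≤ 2 := by
  have key : ∀ m : ℕ, harmonicNum2 (m+1) ≤ 2 - 1/((m:ℝ)+1) := by
    intro m
    induction m with
    | zero => norm_num [harmonicNum2]
    | succ j ih =>
      have hstep : harmonicNum2 (j+1+1) = harmonicNum2 (j+1) + 1/(((j:ℝ)+1)+1)^2 := by
        rw [harmonicNum2, Finset.sum_range_succ, harmonicNum2]
        push_cast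
        ring_nf
      rw [hstep]
      push_cast
      have hq : 1/(((j:ℝ)+1)+1)^2 ≤ 1/((j:ℝ)+1) - 1/(((j:ℝ)+1)+1) := by
        rw [div_sub_div _ _ (by positivity) (by positivity)]
        rw [div_le_div_iff₀ (by positivity) (by positivity)]
        ring_nf
        nlinarith [sq_nonneg ((j:ℝ)+1)]
      push_cast at ih
      linarith
  cases T with
  | zero => simp [harmonicNum2]
  | succ m =>
    have := key m
    have : (0:ℝ) < (m:ℝ)+1 := by positivity
    have h1 : (0:ℝ) ≤ 1/((m:ℝ)+1) := by positivity
    linarith [key m]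

lemma fwRatio_eq {T j : ℕ} (hT : 1 ≤ T) (hj : j + 1 ≤ T) :
    fwRatio T j = (1 + harmonicNum j / harmonicNum T) / (1 + harmonicNum (j+1) / harmonicNum T) := by
  have hHT : (0:ℝ) < harmonicNum T := lt_of_lt_of_le one_pos (one_le_harmonicNum hT)
  have hq : ∀ k : ℕ, k ≤ T → 1 ≤ 1 + harmonicNum k / harmonicNum T ∧
      1 + harmonicNum k / harmonicNum T ≤ 2 := by
    intro k hk
    constructor
    · have : 0 ≤ harmonicNum k / harmonicNum T := div_nonneg (harmonicNum_nonneg k) hHT.le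
      linarith
    · have : harmonicNum k / harmonicNum T ≤ 1 := by
        rw [div_le_one hHT]; exact harmonicNum_mono hk
      linarith
  have hinv : ∀ k : ℕ, k ≤ T →
      1/(1 + fwTime T k) = 1 - Real.log (1 + harmonicNum k / harmonicNum T) := by
    intro k hk
    obtain ⟨h1, h2⟩ := hq k hk
    have hlog : Real.log (1 + harmonicNum k / harmonicNum T) < 1 := by
      calc Real.log (1 + harmonicNum k / harmonicNum T) ≤ Real.log 2 :=
        Real.log_le_log (by linarith) h2
      _ < 1 := by
        have := Real.log_two_lt_d9
        linarith
    have hne : 1 - Real.log (1 + harmonicNum k / harmonicNum T) ≠ 0 := by linarith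
    rw [fwTime]
    have : 1 + (1 / (1 - Real.log (1 + harmonicNum k / harmonicNum T)) - 1)
        = 1 / (1 - Real.log (1 + harmonicNum k / harmonicNum T)) := by ring
    rw [this, one_div_one_div]
  rw [fwRatio, hinv j (le_trans (Nat.le_succ j) hj), hinv (j+1) hj]
  have e : -(1 - Real.log (1 + harmonicNum j / harmonicNum T))
      + (1 - Real.log (1 + harmonicNum (j+1) / harmonicNum T))
      = Real.log (1 + harmonicNum j / harmonicNum T)
        - Real.log (1 + harmonicNum (j+1) / harmonicNum T) := by ring
  rw [e, Real.exp_sub,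
    Real.exp_log (by linarith [(hq j (le_trans (Nat.le_succ j) hj)).1]),
    Real.exp_log (by linarith [(hq (j+1) hj).1])]

lemma step_algebra {sj sj' Fj Fj' B gap γ Ln : ℝ}
    (h1s : 1 ≤ sj) (hs2 : sj ≤ 2) (hss : sj' = sj + gap) (hgap : 0 ≤ gap)
    (hγ : γ * sj' = gap) (hB : 0 ≤ B) (hFj : Fj ≤ B/4) (hLn : 0 ≤ Ln)
    (hP : Fj + γ*(B/sj) - 2*γ*Fj - Ln/2*γ^2 ≤ Fj') :
    sj^2*Fj + gap*B - Ln/2*gap^2 ≤ sj'^2 * Fj' := by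
  have hsj0 : 0 < sj := by linarith
  have hsB : sj * (B/sj) = B := by field_simp
  have e1 : sj'^2*(γ*(B/sj)) = gap*B + gap^2*(B/sj) := by
    calc sj'^2*(γ*(B/sj)) = (γ*sj')*(sj'*(B/sj)) := by ring
    _ = gap*((sj+gap)*(B/sj)) := by rw [hγ, hss]
    _ = gap*(sj*(B/sj)) + gap^2*(B/sj) := by ring
    _ = gap*B + gap^2*(B/sj) := by rw [hsB]
  have e2 : sj'^2*(2*γ*Fj) = 2*gap*sj'*Fj := by
    calc sj'^2*(2*γ*Fj) = 2*((γ*sj')*sj')*Fj := by ring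
    _ = 2*gap*sj'*Fj := by rw [hγ]; ring
  have egap2 : sj'^2*γ^2 = gap^2 := by
    calc sj'^2*γ^2 = (γ*sj')^2 := by ring
    _ = gap^2 := by rw [hγ]
  have hP2 : sj'^2*(Fj + γ*(B/sj) - 2*γ*Fj - Ln/2*γ^2) ≤ sj'^2*Fj' :=
    mul_le_mul_of_nonneg_left hP (sq_nonneg _)
  have hexp : sj'^2*(Fj + γ*(B/sj) - 2*γ*Fj - Ln/2*γ^2)
      = sj'^2*Fj + (gap*B + gap^2*(B/sj)) - 2*gap*sj'*Fj - Ln/2*gap^2 := by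
    calc sj'^2*(Fj + γ*(B/sj) - 2*γ*Fj - Ln/2*γ^2)
        = sj'^2*Fj + sj'^2*(γ*(B/sj)) - sj'^2*(2*γ*Fj) - Ln/2*(sj'^2*γ^2) := by ring
    _ = sj'^2*Fj + (gap*B + gap^2*(B/sj)) - 2*gap*sj'*Fj - Ln/2*gap^2 := by
        rw [e1, e2, egap2]
  rw [hexp] at hP2
  have hFB : Fj ≤ B/sj := by
    have h1 : B/4 ≤ B/2 := by linarith
    have h2 : B/2 ≤ B/sj := by
      rw [div_le_div_iff₀ two_pos hsj0]
      nlinarith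
    linarith
  have key : gap^2*Fj ≤ gap^2*(B/sj) := mul_le_mul_of_nonneg_left hFB (sq_nonneg _)
  have hidz : sj'^2*Fj - 2*gap*sj'*Fj = sj^2*Fj - gap^2*Fj := by rw [hss]; ring
  linarith

/-- There is an absolute constant `C > 0` such that for every `ε > 0`, if the
number of iterations satisfies `T ≥ e^{C √(nL/ε)}` (and `T ≥ 2`), then
`max_{0 ≤ j ≤ T} F(x(t_j)) ≥ (1/4) F(x*) - ε`. -/
theorem fw_best_iterate_eps_bound :
    ∃ C : ℝ, 0 < C ∧
      ∀ ε : ℝ, 0 < ε →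
      ∀ (n : ℕ) (F : (Fin n → ℝ) → ℝ) (gradF : (Fin n → ℝ) → Fin n → ℝ) (L : ℝ),
        0 ≤ L →
        (∀ z ∈ Set.Icc (0 : Fin n → ℝ) 1, 0 ≤ F z) →
        DRSubmodular F →
        HasGradientOnBox F gradF →
        (∀ z ∈ Set.Icc (0 : Fin n → ℝ) 1, ∀ w ∈ Set.Icc (0 : Fin n → ℝ) 1,
          |F w - F z - ∑ i, gradF z i * (w i - z i)| ≤ L / 2 * ∑ i, (w i - z i) ^ 2) →
        F 0 = 0 →
        ∀ P : Set (Fin n → ℝ), P ⊆ Set.Icc 0 1 → Convex ℝ P → (0 : Fin n → ℝ) ∈ P →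
        ∀ xstar ∈ P, (∀ z ∈ P, F z ≤ F xstar) →
        ∀ T : ℕ, 2 ≤ T → Real.exp (C * Real.sqrt ((n : ℝ) * L / ε)) ≤ (T : ℝ) →
        ∀ x v : ℕ → Fin n → ℝ,
          x 0 = 0 →
          (∀ j < T, v j ∈ P) →
          (∀ j < T, ∀ w ∈ P, ∑ i, gradF (x j) i * w i ≤ ∑ i, gradF (x j) i * v j i) →
          (∀ j < T, x (j + 1) = fwRatio T j • x j + (1 - fwRatio T j) • v j) →
          ∃ j ≤ T, F (x j) ≥ 1 / 4 * F xstar - ε := by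
  refine ⟨1, one_pos, ?_⟩
  intro ε hε n F gradF L hL hF0 hDR hgrad hsmooth hF00 P hPbox hPconv hP0 xstar hxstarP
    hxstarmax T hT2 hTexp x v hx0 hvP hlmo hupd
  by_contra hcon
  push_neg at hcon
  -- hcon : ∀ j ≤ T, F (x j) < 1 / 4 * F xstar - ε
  set B := F xstar with hBdef
  have hT1 : 1 ≤ T := le_trans one_le_two hT2
  have hHT : (0:ℝ) < harmonicNum T := lt_of_lt_of_le one_pos (one_le_harmonicNum hT1)
  set s : ℕ → ℝ := fun k => 1 + harmonicNum k / harmonicNum T with hsdef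
  have hs_one : ∀ k : ℕ, 1 ≤ s k := by
    intro k
    have : 0 ≤ harmonicNum k / harmonicNum T := div_nonneg (harmonicNum_nonneg k) hHT.le
    simp only [hsdef]; linarith
  have hs_two : ∀ k : ℕ, k ≤ T → s k ≤ 2 := by
    intro k hk
    have : harmonicNum k / harmonicNum T ≤ 1 := by
      rw [div_le_one hHT]; exact harmonicNum_mono hk
    simp only [hsdef]; linarith
  have hs_mono : ∀ j k : ℕ, j ≤ k → s j ≤ s k := by
    intro j k hjk
    simp only [hsdef]
    have : harmonicNum j / harmonicNum T ≤ harmonicNum k / harmonicNum T := by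
      gcongr
      exact harmonicNum_mono hjk
    linarith
  have hsT : s T = 2 := by
    simp only [hsdef]
    rw [div_self hHT.ne']
    norm_num
  have hs0 : s 0 = 1 := by simp [hsdef, harmonicNum]
  have hgap : ∀ j : ℕ, s (j+1) - s j = 1/((((j:ℝ))+1) * harmonicNum T) := by
    intro j
    have h1 : s (j+1) - s j = (harmonicNum (j+1) - harmonicNum j)/harmonicNum T := by
      simp only [hsdef]; ring
    rw [h1, harmonicNum_succ]
    rw [add_sub_cancel_left, div_div]
  have hgapnn : ∀ j : ℕ, 0 ≤ s (j+1) - s j := by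
    intro j
    rw [hgap j]
    have : (0:ℝ) < ((j:ℝ)+1) * harmonicNum T := by positivity
    positivity
  have hRatio : ∀ j : ℕ, j < T → fwRatio T j = s j / s (j+1) := by
    intro j hj
    exact fwRatio_eq hT1 hj
  have hxstarbox : xstar ∈ Set.Icc (0:Fin n → ℝ) 1 := hPbox hxstarP
  have hB0 : 0 ≤ B := hF0 _ hxstarbox
  have hspos : ∀ k : ℕ, 0 < s k := fun k => lt_of_lt_of_le one_pos (hs_one k)
  -- iterate membership and coordinate bound
  have hxprop : ∀ j : ℕ, j ≤ T → x j ∈ P ∧ (∀ i, x j i ≤ 1 - 1/(s j)) := by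
    intro j
    induction j with
    | zero =>
      intro _
      refine ⟨by rw [hx0]; exact hP0, ?_⟩
      intro i
      rw [hx0, hs0]
      norm_num
    | succ j ih =>
      intro hj1
      have hjT : j < T := hj1
      obtain ⟨hxP, hxcoord⟩ := ih (le_of_lt hjT)
      have hρeq : fwRatio T j = s j / s (j+1) := hRatio j hjT
      have hsle : s j ≤ s (j+1) := hs_mono j (j+1) (Nat.le_succ j)
      have hρ0 : 0 ≤ fwRatio T j := by
        rw [hρeq]; exact le_of_lt (div_pos (hspos j) (hspos (j+1)))
      have hρ1 : fwRatio T j ≤ 1 := by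
        rw [hρeq, div_le_one (hspos (j+1))]; exact hsle
      constructor
      · rw [hupd j hjT]
        exact hPconv hxP (hvP j hjT) hρ0 (by linarith) (by ring)
      · intro i
        rw [hupd j hjT]
        simp only [Pi.add_apply, Pi.smul_apply, smul_eq_mul]
        have hv1 : v j i ≤ 1 := by simpa using (hPbox (hvP j hjT)).2 i
        have hxc := hxcoord i
        have ha : fwRatio T j * x j i ≤ fwRatio T j * (1 - 1/(s j)) :=
          mul_le_mul_of_nonneg_left hxc hρ0
        have hb : (1 - fwRatio T j) * v j i ≤ (1 - fwRatio T j) * 1 :=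
          mul_le_mul_of_nonneg_left hv1 (by linarith)
        have hend : (s j/s (j+1)) * (1 - 1/(s j)) + (1 - s j/s (j+1)) = 1 - 1/(s (j+1)) := by
          have h1 : s j ≠ 0 := (hspos j).ne'
          have h2 : s (j+1) ≠ 0 := (hspos (j+1)).ne'
          field_simp
          ring
        rw [hρeq] at ha hb ⊢
        linarith
  -- the per-step analytic inequality
  have hPstep : ∀ j : ℕ, j < T →
      F (x j) + (1 - fwRatio T j)*(B/(s j)) - 2*(1 - fwRatio T j)*F (x j)
        - (L*(n:ℝ)/2)*(1 - fwRatio T j)^2 ≤ F (x (j+1)) := by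
    intro j hjT
    set γ := 1 - fwRatio T j with hγdef
    have hρeq : fwRatio T j = s j / s (j+1) := hRatio j hjT
    have hsle : s j ≤ s (j+1) := hs_mono j (j+1) (Nat.le_succ j)
    have hρ1 : fwRatio T j ≤ 1 := by
      rw [hρeq, div_le_one (hspos (j+1))]; exact hsle
    have hγ0 : 0 ≤ γ := by rw [hγdef]; linarith
    obtain ⟨hxjP, hxjcoord⟩ := hxprop j (le_of_lt hjT)
    obtain ⟨hxj1P, _⟩ := hxprop (j+1) hjT
    have hxjbox := hPbox hxjP
    have hxj1box := hPbox hxj1P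
    have hvbox := hPbox (hvP j hjT)
    have hdiff : ∀ i, x (j+1) i - x j i = γ*(v j i - x j i) := by
      intro i
      rw [hupd j hjT]
      simp only [Pi.add_apply, Pi.smul_apply, smul_eq_mul, hγdef]
      ring
    have hsm := (abs_le.1 (hsmooth (x j) hxjbox (x (j+1)) hxj1box)).1
    have hS : ∑ i, gradF (x j) i * (x (j+1) i - x j i)
        = γ * ∑ i, gradF (x j) i * (v j i - x j i) := by
      rw [Finset.mul_sum]
      apply Finset.sum_congr rfl
      intro i _
      rw [hdiff i]; ring
    have hQ : ∑ i, (x (j+1) i - x j i)^2 ≤ γ^2 * (n:ℝ) := by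
      have h1 : ∀ i : Fin n, (x (j+1) i - x j i)^2 ≤ γ^2 * 1 := by
        intro i
        rw [hdiff i, mul_pow]
        have hv0 : (0:ℝ) ≤ v j i := by simpa using hvbox.1 i
        have hv1 : v j i ≤ 1 := by simpa using hvbox.2 i
        have hx0' : (0:ℝ) ≤ x j i := by simpa using hxjbox.1 i
        have hx1' : x j i ≤ 1 := by simpa using hxjbox.2 i
        have : (v j i - x j i)^2 ≤ 1 := by nlinarith
        nlinarith [sq_nonneg γ]
      calc ∑ i, (x (j+1) i - x j i)^2 ≤ ∑ _i : Fin n, γ^2 * 1 :=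
            Finset.sum_le_sum (fun i _ => h1 i)
      _ = γ^2 * (n:ℝ) := by simp [Finset.sum_const, mul_comm]
    have hD1 : ∑ i, gradF (x j) i * (xstar i - x j i)
        ≤ ∑ i, gradF (x j) i * (v j i - x j i) := by
      have hl := hlmo j hjT xstar hxstarP
      have he : ∑ i, gradF (x j) i * (v j i - x j i)
          - ∑ i, gradF (x j) i * (xstar i - x j i)
          = ∑ i, gradF (x j) i * v j i - ∑ i, gradF (x j) i * xstar i := by
        rw [← Finset.sum_sub_distrib, ← Finset.sum_sub_distrib]
        apply Finset.sum_congr rfl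
        intro i _; ring
      linarith
    have hC := grad_inner_lower hDR hgrad hF0 hxjbox hxstarbox
    have hm0 : (0:ℝ) ≤ 1 - 1/(s j) := by
      have : 1/(s j) ≤ 1 := by
        rw [div_le_one (hspos j)]; exact hs_one j
      linarith
    have hm1 : 1 - 1/(s j) < 1 := by
      have : 0 < 1/(s j) := div_pos one_pos (hspos j)
      linarith
    have hU := union_lower hDR hgrad hF0 hxjbox hxstarbox hxjcoord hm1 hm0
    have hU' : (1/(s j)) * B ≤ F (fun i => max (x j i) (xstar i)) := by
      have he : (1 - (1 - 1/(s j))) = 1/(s j) := by ring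
      rw [he] at hU
      exact hU
    have hDlow : (1/(s j)) * B - 2*F (x j) ≤ ∑ i, gradF (x j) i * (v j i - x j i) := by
      linarith
    have hgD : γ * ((1/(s j)) * B - 2*F (x j)) ≤ γ * ∑ i, gradF (x j) i * (v j i - x j i) :=
      mul_le_mul_of_nonneg_left hDlow hγ0
    have hLQ : L/2 * ∑ i, (x (j+1) i - x j i)^2 ≤ L/2 * (γ^2 * (n:ℝ)) :=
      mul_le_mul_of_nonneg_left hQ (by linarith)
    have hexp1 : γ * ((1/(s j)) * B - 2*F (x j)) = γ*(B/(s j)) - 2*γ*F (x j) := by ring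
    have hexp2 : L/2 * (γ^2 * (n:ℝ)) = (L*(n:ℝ)/2)*γ^2 := by ring
    rw [hS] at hsm
    linarith
  -- potential induction
  have hmain : ∀ j : ℕ, j ≤ T →
      (s j - 1)*B - (L*(n:ℝ)/2)*(harmonicNum2 j/(harmonicNum T)^2) ≤ (s j)^2 * F (x j) := by
    intro j
    induction j with
    | zero =>
      intro _
      rw [hs0, hx0, hF00]
      norm_num [harmonicNum2]
    | succ j ih =>
      intro hj1
      have hjT : j < T := hj1
      have ihj := ih (le_of_lt hjT)
      have hρeq : fwRatio T j = s j / s (j+1) := hRatio j hjT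
      have hγs : (1 - fwRatio T j) * s (j+1) = s (j+1) - s j := by
        rw [hρeq, sub_mul, one_mul, div_mul_cancel₀ _ (hspos (j+1)).ne']
      have hconj := hcon j (le_of_lt hjT)
      have hFj4 : F (x j) ≤ B/4 := by
        linarith [hconj, hε]
      have hsa := step_algebra (hs_one j) (hs_two j (le_of_lt hjT))
        (by ring : s (j+1) = s j + (s (j+1) - s j)) (hgapnn j) hγs hB0 hFj4
        (mul_nonneg hL (Nat.cast_nonneg n)) (hPstep j hjT)
      have hgap2 : (s (j+1) - s j)^2 = (1/(((j:ℝ))+1)^2)/(harmonicNum T)^2 := by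
        rw [hgap j, div_pow, one_pow, mul_pow, div_div]
      have hH2succ : harmonicNum2 (j+1) = harmonicNum2 j + 1/(((j:ℝ))+1)^2 := by
        rw [harmonicNum2, Finset.sum_range_succ, harmonicNum2]
      have hsum : (s (j+1) - 1)*B = (s j - 1)*B + (s (j+1) - s j)*B := by ring
      have hsum2 : (L*(n:ℝ)/2)*(harmonicNum2 (j+1)/(harmonicNum T)^2)
          = (L*(n:ℝ)/2)*(harmonicNum2 j/(harmonicNum T)^2)
            + (L*(n:ℝ)/2)*((s (j+1) - s j)^2) := by
        rw [hH2succ, hgap2]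
        ring
      linarith
  -- final contradiction
  have hfin := hmain T (le_refl T)
  rw [hsT] at hfin
  have hconT := hcon T (le_refl T)
  have hsqB : (2:ℝ)^2 * F (x T) = 4 * F (x T) := by norm_num
  rw [hsqB] at hfin
  -- 4 ε < (L n /2) * H2T/HT^2
  have hx4 : (4:ℝ) * F (x T) < B - 4*ε := by
    linarith
  have hkey : 4*ε < (L*(n:ℝ)/2)*(harmonicNum2 T/(harmonicNum T)^2) := by
    linarith
  -- bound RHS
  have hNL0 : (0:ℝ) ≤ (n:ℝ)*L := mul_nonneg (Nat.cast_nonneg n) hL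
  have hH2nn : 0 ≤ harmonicNum2 T := by
    apply Finset.sum_nonneg; intro k _; positivity
  have hHTsq : (0:ℝ) < (harmonicNum T)^2 := by positivity
  rcases eq_or_lt_of_le hNL0 with hNL | hNL
  · have hLn0 : L*(n:ℝ) = 0 := by rw [mul_comm]; exact hNL.symm
    have hz : L*(n:ℝ)/2*(harmonicNum2 T/(harmonicNum T)^2) = 0 := by
      rw [hLn0]
      norm_num
    rw [hz] at hkey
    linarith
  · have hNLε : (0:ℝ) < (n:ℝ)*L/ε := div_pos hNL hε
    have hlogT : Real.sqrt ((n:ℝ)*L/ε) ≤ Real.log T := by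
      rw [Real.le_log_iff_exp_le (by positivity : (0:ℝ) < (T:ℝ))]
      calc Real.exp (Real.sqrt ((n:ℝ)*L/ε)) = Real.exp (1 * Real.sqrt ((n:ℝ)*L/ε)) := by
            rw [one_mul]
      _ ≤ (T:ℝ) := hTexp
    have hHT2 : (n:ℝ)*L/ε ≤ (harmonicNum T)^2 := by
      have h1 : Real.log T ≤ Real.log ((T:ℝ)+1) := by
        apply Real.log_le_log (by positivity)
        linarith
      have h2 : Real.sqrt ((n:ℝ)*L/ε) ≤ harmonicNum T := by
        calc Real.sqrt ((n:ℝ)*L/ε) ≤ Real.log T := hlogT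
        _ ≤ Real.log ((T:ℝ)+1) := h1
        _ ≤ harmonicNum T := log_le_harmonicNum T
      calc (n:ℝ)*L/ε = (Real.sqrt ((n:ℝ)*L/ε))^2 := by
            rw [Real.sq_sqrt hNLε.le]
      _ ≤ (harmonicNum T)^2 := by
            apply pow_le_pow_left₀ (Real.sqrt_nonneg _) h2
    have hbound : (L*(n:ℝ)/2)*(harmonicNum2 T/(harmonicNum T)^2) ≤ ε := by
      have h2 : harmonicNum2 T ≤ 2 := harmonicNum2_le_two T
      have step1 : (L*(n:ℝ)/2)*(harmonicNum2 T/(harmonicNum T)^2)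
          ≤ (L*(n:ℝ)/2)*(2/(harmonicNum T)^2) := by
        apply mul_le_mul_of_nonneg_left _
          (div_nonneg (mul_nonneg hL (Nat.cast_nonneg n)) two_pos.le)
        gcongr
      have step2 : (L*(n:ℝ)/2)*(2/(harmonicNum T)^2) = ((n:ℝ)*L)/(harmonicNum T)^2 := by
        ring
      have step3 : ((n:ℝ)*L)/(harmonicNum T)^2 ≤ ((n:ℝ)*L)/(((n:ℝ)*L)/ε) := by
        rw [div_le_div_iff₀ hHTsq hNLε]
        exact mul_le_mul_of_nonneg_left hHT2 hNL0
      have step4 : ((n:ℝ)*L)/(((n:ℝ)*L)/ε) = ε := by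
        rw [div_div_eq_mul_div, mul_comm, mul_div_assoc, div_self hNL.ne', mul_one]
      linarith only [step1, step2, step3, step4]
    linarith only [hkey, hbound, hε]
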